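/- Let A ∈ ℝ^{n×m} be the matrix of a two-player zero-sum matrix game with value v. Call a pure strategy j ∈ {1,…,n} of player 1 essential if there exists a Nash equilibrium (x,y) with x_j > 0, and a pure strategy k ∈ {1,…,m} of player 2 essential if there exists a Nash equilibrium (x,y) with y_k > 0. Then there exists a Nash equilibrium (x*, y*) such that x*_j > 0 for every essential strategy j of player 1 and y*_k > 0 for every essential strategy k of player 2, and moreover (A y*)_j > v for every j ∉ supp(x*) and (Aᵀ x*)_k < v for every k ∉ supp(y*). -/

import Mathlib

open Matrix Filter Finset Topology

noncomputable section

/-- `(x, y)` is a Nash equilibrium of the two-player zero-sum matrix game with matrix `A`,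
where player 1 minimizes `xᵀAy` over the simplex and player 2 maximizes it. -/
def IsNashPair {n m : ℕ} (A : Matrix (Fin n) (Fin m) ℝ)
    (x : Fin n → ℝ) (y : Fin m → ℝ) : Prop :=
  x ∈ stdSimplex ℝ (Fin n) ∧ y ∈ stdSimplex ℝ (Fin m) ∧
    (∀ x' ∈ stdSimplex ℝ (Fin n), x ⬝ᵥ A.mulVec y ≤ x' ⬝ᵥ A.mulVec y) ∧
    ∀ y' ∈ stdSimplex ℝ (Fin m), x ⬝ᵥ A.mulVec y' ≤ x ⬝ᵥ A.mulVec y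

/-- The value `v = min_{x ∈ Δ_n} max_{y ∈ Δ_m} xᵀAy` of the matrix game. -/
def gameValue {n m : ℕ} (A : Matrix (Fin n) (Fin m) ℝ) : ℝ :=
  sInf ((fun x => sSup ((fun y => x ⬝ᵥ A.mulVec y) '' stdSimplex ℝ (Fin m)))
    '' stdSimplex ℝ (Fin n))


section Aux

variable {q : ℕ}

lemma rep_functional {q : ℕ} (f : (Fin q → ℝ) →L[ℝ] ℝ) (y : Fin q → ℝ) :
    f y = ∑ k, y k * f (Pi.single k 1) := by
  have hy : y = ∑ k, Pi.single k (y k) := by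
    rw [Finset.univ_sum_single]
  conv_lhs => rw [hy]
  rw [map_sum]
  congr 1; ext k
  have h1 : Pi.single k (y k) = y k • (Pi.single k 1 : Fin q → ℝ) := by
    funext j; by_cases h : j = k <;> simp [h, Pi.single_apply]
  rw [h1, f.map_smul, smul_eq_mul]

/-- The cone of nonnegative combinations of a finite family of vectors. -/
def coneIm {ι : Type*} [Fintype ι] (v : ι → (Fin q → ℝ)) : Set (Fin q → ℝ) :=
  {z | ∃ u : ι → ℝ, (∀ i, 0 ≤ u i) ∧ z = ∑ i, u i • v i}

lemma coneIm_convex {ι : Type*} [Fintype ι] (v : ι → (Fin q → ℝ)) : Convex ℝ (coneIm v) := by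
  rintro z ⟨u, hu, rfl⟩ z' ⟨u', hu', rfl⟩ a b ha hb _
  refine ⟨fun i => a * u i + b * u' i, fun i =>
    add_nonneg (mul_nonneg ha (hu i)) (mul_nonneg hb (hu' i)), ?_⟩
  rw [Finset.smul_sum, Finset.smul_sum, ← Finset.sum_add_distrib]
  congr 1; funext i j
  simp only [Pi.add_apply, Pi.smul_apply, smul_eq_mul]
  ring

lemma coneIm_zero_mem {ι : Type*} [Fintype ι] (v : ι → (Fin q → ℝ)) : (0:Fin q → ℝ) ∈ coneIm v :=
  ⟨0, fun i => le_rfl, by simp⟩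

lemma coneIm_smul_mem {ι : Type*} [Fintype ι] (v : ι → (Fin q → ℝ)) {z} (hz : z ∈ coneIm v)
    {t : ℝ} (ht : 0 ≤ t) : t • z ∈ coneIm v := by
  obtain ⟨u, hu, rfl⟩ := hz
  refine ⟨fun i => t * u i, fun i => mul_nonneg ht (hu i), ?_⟩
  rw [Finset.smul_sum]; congr 1; ext i; rw [smul_smul]

lemma coneIm_closed_of_indep {ι : Type*} [Fintype ι] (v : ι → (Fin q → ℝ))
    (hv : LinearIndependent ℝ v) : IsClosed (coneIm v) := by
  classical
  let φ : (ι → ℝ) →ₗ[ℝ] (Fin q → ℝ) :=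
    { toFun := fun u => ∑ i, u i • v i
      map_add' := by intro a b; simp [add_smul, Finset.sum_add_distrib]
      map_smul' := by
        intro c a
        simp only [RingHom.id_apply, Finset.smul_sum, Pi.smul_apply, smul_eq_mul]
        congr 1; ext i; rw [smul_smul] }
  have hker : LinearMap.ker φ = ⊥ := by
    rw [LinearMap.ker_eq_bot']
    intro u hu
    have := (Fintype.linearIndependent_iff.mp hv) u hu
    funext i; exact this i
  have hemb := LinearMap.isClosedEmbedding_of_injective hker
  have himg : coneIm v = φ '' {u : ι → ℝ | ∀ i, 0 ≤ u i} := by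
    ext z; constructor
    · rintro ⟨u, hu, rfl⟩; exact ⟨u, hu, rfl⟩
    · rintro ⟨u, hu, rfl⟩; exact ⟨u, hu, rfl⟩
  rw [himg]
  refine hemb.isClosedMap _ ?_
  have h2 : {u : ι → ℝ | ∀ i, 0 ≤ u i} = ⋂ i, {u : ι → ℝ | 0 ≤ u i} := by
    ext u; simp [Set.mem_iInter]
  rw [h2]
  exact isClosed_iInter fun i => isClosed_le continuous_const (continuous_apply i)

lemma coneIm_restrict_subset {ι : Type*} [Fintype ι] [DecidableEq ι] (v : ι → (Fin q → ℝ))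
    (s : Finset ι) : coneIm (fun i : s => v i) ⊆ coneIm v := by
  rintro z ⟨u, hu, rfl⟩
  refine ⟨fun i => if h : i ∈ s then u ⟨i, h⟩ else 0, fun i => by
    by_cases h : i ∈ s <;> simp [h, hu], ?_⟩
  have h1 : ∑ i : {x // x ∈ s}, u i • v i =
      ∑ i ∈ s, (if h : i ∈ s then u ⟨i, h⟩ else 0) • v i := by
    rw [← Finset.sum_coe_sort s (fun i => (if h : i ∈ s then u ⟨i, h⟩ else 0) • v i)]
    apply Finset.sum_congr rfl
    intro i _
    simp
  rw [h1]
  have h2 := Finset.sum_subset (f := fun i => (if h : i ∈ s then u ⟨i, h⟩ else 0) • v i)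
    (Finset.subset_univ s) (fun i _ hi => by simp only [dif_neg hi, zero_smul])
  exact h2

lemma caratheodory_cone {ι : Type*} [Fintype ι] [DecidableEq ι] (v : ι → (Fin q → ℝ)) :
    ∀ (N : ℕ) (u : ι → ℝ), (Finset.univ.filter (fun i => u i ≠ 0)).card ≤ N →
      (∀ i, 0 ≤ u i) →
      ∃ s : Finset ι, LinearIndependent ℝ (fun i : s => v i) ∧
        (∑ i, u i • v i) ∈ coneIm (fun i : s => v i) := by
  classical
  intro N
  induction N with
  | zero =>
    intro u hcard hu
    have hT : (Finset.univ.filter (fun i => u i ≠ 0)) = ∅ := Finset.card_eq_zero.mp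
      (Nat.le_zero.mp hcard)
    have hu0 : ∀ i, u i = 0 := by
      intro i
      by_contra h
      have : i ∈ Finset.univ.filter (fun i => u i ≠ 0) := by simp [h]
      simp [hT] at this
    refine ⟨∅, ?_, ?_⟩
    · haveI : IsEmpty ((∅ : Finset ι) : Type _) := ⟨fun x => absurd x.2 (Finset.notMem_empty _)⟩
      exact linearIndependent_empty_type
    · have : ∑ i, u i • v i = 0 := by
        apply Finset.sum_eq_zero; intro i _; rw [hu0 i, zero_smul]
      rw [this]
      exact ⟨0, fun i => le_rfl, by simp⟩
  | succ N ih =>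
    intro u hcard hu
    set T := Finset.univ.filter (fun i => u i ≠ 0) with hTdef
    by_cases hind : LinearIndependent ℝ (fun i : T => v i)
    · -- independent support: done
      refine ⟨T, hind, ⟨fun i => u i, fun i => hu i, ?_⟩⟩
      have h1 : ∑ i, u i • v i = ∑ i ∈ T, u i • v i := by
        symm
        apply Finset.sum_subset (Finset.subset_univ T)
        intro i _ hi
        have : u i = 0 := by
          by_contra h
          exact hi (by simp [hTdef, h])
        rw [this, zero_smul]
      rw [h1, ← Finset.sum_coe_sort T (fun i => u i • v i)]
    · -- dependent: reduce support
      obtain ⟨g, hgsum, i₁, hgne⟩ := Fintype.not_linearIndependent_iff.mp hind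
      -- extend g to ι by zero
      set c : ι → ℝ := fun i => if h : i ∈ T then g ⟨i, h⟩ else 0 with hcdef
      have hcsum : ∑ i, c i • v i = 0 := by
        have h1 : ∑ i, c i • v i = ∑ i ∈ T, c i • v i := by
          symm
          apply Finset.sum_subset (Finset.subset_univ T)
          intro i _ hi
          simp only [hcdef]
          rw [dif_neg hi, zero_smul]
        have h2 : ∑ i ∈ T, c i • v i = ∑ i : T, g i • v i := by
          rw [← Finset.sum_coe_sort T (fun i => c i • v i)]
          apply Finset.sum_congr rfl
          intro i _
          simp [hcdef]
        rw [h1, h2, hgsum]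
      have hcsupp : ∀ i, i ∉ T → c i = 0 := by
        intro i hi; simp only [hcdef]; rw [dif_neg hi]
      -- WLOG some c i > 0
      have key : ∀ c : ι → ℝ, (∑ i, c i • v i = 0) → (∀ i, i ∉ T → c i = 0) →
          (∃ i, 0 < c i) →
          ∃ s : Finset ι, LinearIndependent ℝ (fun i : s => v i) ∧
            (∑ i, u i • v i) ∈ coneIm (fun i : s => v i) := by
        intro c hcsum hcsupp ⟨i₂, hi₂⟩
        set P := Finset.univ.filter (fun i => 0 < c i) with hPdef
        have hPne : P.Nonempty := ⟨i₂, by simp [hPdef, hi₂]⟩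
        obtain ⟨i₀, hi₀P, hi₀min⟩ := Finset.exists_min_image P (fun i => u i / c i) hPne
        have hci₀ : 0 < c i₀ := by
          have := hi₀P; simp [hPdef] at this; exact this
        set t := u i₀ / c i₀ with htdef
        have ht : 0 ≤ t := div_nonneg (hu i₀) hci₀.le
        set u' : ι → ℝ := fun i => u i - t * c i with hu'def
        have hu' : ∀ i, 0 ≤ u' i := by
          intro i
          by_cases h : 0 < c i
          · have hiP : i ∈ P := by simp [hPdef, h]
            have := hi₀min i hiP
            have h2 : t * c i ≤ u i := by
              rw [htdef]
              calc u i₀ / c i₀ * c i ≤ u i / c i * c i := by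
                    apply mul_le_mul_of_nonneg_right this h.le
                _ = u i := div_mul_cancel₀ _ (ne_of_gt h)
            simp only [hu'def]; linarith
          · push_neg at h
            have h2 : t * c i ≤ 0 := mul_nonpos_of_nonneg_of_nonpos ht h
            have h3 := hu i
            simp only [hu'def]; linarith
        have hsum' : ∑ i, u' i • v i = ∑ i, u i • v i := by
          have : ∑ i, u' i • v i = ∑ i, (u i • v i - (t * c i) • v i) := by
            apply Finset.sum_congr rfl; intro i _
            simp only [hu'def, sub_smul]
          rw [this, Finset.sum_sub_distrib]
          have h0 : ∑ i, (t * c i) • v i = t • ∑ i, c i • v i := by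
            rw [Finset.smul_sum]
            apply Finset.sum_congr rfl; intro i _
            rw [smul_smul]
          rw [h0, hcsum, smul_zero, sub_zero]
        have hsupp' : Finset.univ.filter (fun i => u' i ≠ 0) ⊆ T.erase i₀ := by
          intro i hi
          simp only [Finset.mem_filter] at hi
          rw [Finset.mem_erase]
          constructor
          · rintro rfl
            apply hi.2
            simp only [hu'def, htdef]
            field_simp
            ring
          · by_contra h
            have hu0 : u i = 0 := by
              by_contra h2
              exact h (by simp [hTdef, h2])
            have hc0 : c i = 0 := hcsupp i h
            apply hi.2
            simp [hu'def, hu0, hc0]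
        have hi₀T : i₀ ∈ T := by
          by_contra h
          have := hcsupp i₀ h
          rw [this] at hci₀
          exact lt_irrefl 0 hci₀
        have hcard' : (Finset.univ.filter (fun i => u' i ≠ 0)).card ≤ N := by
          calc (Finset.univ.filter (fun i => u' i ≠ 0)).card ≤ (T.erase i₀).card :=
                Finset.card_le_card hsupp'
            _ = T.card - 1 := Finset.card_erase_of_mem hi₀T
            _ ≤ (N + 1) - 1 := Nat.sub_le_sub_right hcard 1
            _ = N := rfl
        obtain ⟨s, hs1, hs2⟩ := ih u' hcard' hu'
        rw [hsum'] at hs2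
        exact ⟨s, hs1, hs2⟩
      by_cases hpos : ∃ i, 0 < c i
      · exact key c hcsum hcsupp hpos
      · push_neg at hpos
        refine key (fun i => -c i) ?_ (fun i hi => by show -c i = 0; rw [hcsupp i hi, neg_zero]) ?_
        · have : ∑ i, (-c i) • v i = -∑ i, c i • v i := by
            rw [← Finset.sum_neg_distrib]
            apply Finset.sum_congr rfl; intro i _; rw [neg_smul]
          rw [this, hcsum, neg_zero]
        · refine ⟨i₁, ?_⟩
          show 0 < -c (i₁ : ι)
          have h1 : c (i₁ : ι) = g i₁ := by
            simp only [hcdef]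
            rw [dif_pos i₁.2]
          have h2 : c (i₁ : ι) ≤ 0 := hpos _
          have h3 : c (i₁ : ι) ≠ 0 := by rw [h1]; exact hgne
          have : c (i₁ : ι) < 0 := lt_of_le_of_ne h2 h3
          linarith

lemma coneIm_isClosed' {ι : Type*} [Fintype ι] [DecidableEq ι] (v : ι → (Fin q → ℝ))
    (hcl : ∀ s : Finset ι, LinearIndependent ℝ (fun i : s => v i) →
      IsClosed (coneIm (fun i : s => v i))) : IsClosed (coneIm v) := by
  classical
  have heq : coneIm v = ⋃ s : {s : Finset ι // LinearIndependent ℝ (fun i : s => v i)},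
      coneIm (fun i : (s : Finset ι) => v i) := by
    ext z; constructor
    · rintro ⟨u, hu, rfl⟩
      obtain ⟨s, hs1, hs2⟩ := caratheodory_cone v (Finset.univ.filter (fun i => u i ≠ 0)).card
        u le_rfl hu
      exact Set.mem_iUnion.mpr ⟨⟨s, hs1⟩, hs2⟩
    · intro hz
      obtain ⟨s, hzs⟩ := Set.mem_iUnion.mp hz
      exact coneIm_restrict_subset v s hzs
  rw [heq]
  exact isClosed_iUnion_of_finite fun s => hcl s s.2

lemma coneIm_isClosed {ι : Type*} [Fintype ι] [DecidableEq ι] (v : ι → (Fin q → ℝ)) :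
    IsClosed (coneIm v) :=
  coneIm_isClosed' v (fun _s hs => coneIm_closed_of_indep _ hs)

lemma coneIm_generator_mem {ι : Type*} [Fintype ι] [DecidableEq ι] (v : ι → (Fin q → ℝ))
    (i : ι) : v i ∈ coneIm v := by
  refine ⟨fun i' => if i' = i then 1 else 0, fun i' => by show (0:ℝ) ≤ if i' = i then 1 else 0; split <;> norm_num, ?_⟩
  symm
  rw [Finset.sum_eq_single i]
  · simp
  · intro b _ hb; simp [hb]
  · intro hI; exact absurd (Finset.mem_univ i) hI

lemma farkas_row {n m : ℕ} (B : Matrix (Fin n) (Fin m) ℝ) (j : Fin n)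
    (h : ∀ y : Fin m → ℝ, (∀ k, 0 ≤ y k) → (∀ i, 0 ≤ (B *ᵥ y) i) → (B *ᵥ y) j ≤ 0) :
    ∃ x : Fin n → ℝ, (∀ i, 0 ≤ x i) ∧ (∀ k, (Bᵀ *ᵥ x) k ≤ 0) ∧ 0 < x j := by
  classical
  set w : Fin n ⊕ Fin m → (Fin m → ℝ) :=
    Sum.elim (fun i => B i) (fun k => Pi.single k 1) with hwdef
  have hmem : -B j ∈ coneIm w := by
    by_contra hnot
    obtain ⟨f, u, hfu, huf⟩ := geometric_hahn_banach_closed_point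
      (coneIm_convex w) (coneIm_isClosed w) hnot
    have hu0 : 0 < u := by
      have := hfu 0 (coneIm_zero_mem w)
      simpa using this
    have hfz : ∀ z ∈ coneIm w, f z ≤ 0 := by
      intro z hz
      by_contra hpos
      push_neg at hpos
      have ht : (0:ℝ) ≤ (u + 1) / f z := by positivity
      have := hfu (((u + 1) / f z) • z) (coneIm_smul_mem w hz ht)
      rw [f.map_smul, smul_eq_mul, div_mul_cancel₀ _ (ne_of_gt hpos)] at this
      linarith
    set yv : Fin m → ℝ := fun k => -f (Pi.single k 1) with hyv
    have hy0 : ∀ k, 0 ≤ yv k := by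
      intro k
      have : f (Pi.single k 1) ≤ 0 := hfz _ (by
        have := coneIm_generator_mem w (Sum.inr k); simpa [hwdef] using this)
      simp [hyv]; linarith
    have hrep : ∀ z : Fin m → ℝ, f z = -∑ k, z k * yv k := by
      intro z
      rw [rep_functional f z]
      rw [← Finset.sum_neg_distrib]
      apply Finset.sum_congr rfl
      intro k _
      simp [hyv]
    have hBy : ∀ i, 0 ≤ (B *ᵥ yv) i := by
      intro i
      have h1 : f (B i) ≤ 0 := hfz _ (by
        have := coneIm_generator_mem w (Sum.inl i); simpa [hwdef] using this)
      rw [hrep (B i)] at h1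
      have : (B *ᵥ yv) i = ∑ k, B i k * yv k := rfl
      rw [this]
      linarith
    have hj : 0 < (B *ᵥ yv) j := by
      have h1 : 0 < f (-B j) := lt_trans hu0 huf
      rw [hrep (-B j)] at h1
      have h2 : ∑ k, (-B j) k * yv k = -∑ k, B j k * yv k := by
        rw [← Finset.sum_neg_distrib]
        apply Finset.sum_congr rfl; intro k _; simp
      rw [h2, neg_neg] at h1
      exact h1
    exact absurd (h yv hy0 hBy) (not_le.mpr hj)
  obtain ⟨uu, huu, hsum⟩ := hmem
  refine ⟨fun i => uu (Sum.inl i) + (if i = j then 1 else 0), fun i => by show (0:ℝ) ≤ uu (Sum.inl i) + (if i = j then 1 else 0); have := huu (Sum.inl i); split <;> linarith, ?_, ?_⟩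
  · intro k
    have hk := congrFun hsum k
    rw [Fintype.sum_sum_type] at hk
    simp only [Pi.add_apply, Finset.sum_apply, Pi.smul_apply, smul_eq_mul, hwdef,
      Sum.elim_inl, Sum.elim_inr, Pi.neg_apply] at hk
    have hsingle : ∑ k' : Fin m, uu (Sum.inr k') * (Pi.single k' 1 : Fin m → ℝ) k = uu (Sum.inr k) := by
      rw [Finset.sum_eq_single k]
      · simp
      · intro b _ hb; simp [Pi.single_apply, hb]
      · intro hk'; exact absurd (Finset.mem_univ k) hk'
    rw [hsingle] at hk
    have hBx : (Bᵀ *ᵥ fun i => uu (Sum.inl i) + (if i = j then 1 else 0)) k =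
        (∑ i, uu (Sum.inl i) * B i k) + B j k := by
      have : (Bᵀ *ᵥ fun i => uu (Sum.inl i) + (if i = j then 1 else 0)) k
          = ∑ i, (uu (Sum.inl i) + (if i = j then 1 else 0)) * B i k := by
        simp [Matrix.mulVec, dotProduct, transpose_apply, mul_comm]
      rw [this, Finset.sum_congr rfl (fun i _ => add_mul _ _ _), Finset.sum_add_distrib]
      congr 1
      rw [Finset.sum_eq_single j]
      · simp
      · intro b _ hb; simp [hb]
      · intro hj'; exact absurd (Finset.mem_univ j) hj'
    rw [hBx]
    have := huu (Sum.inr k)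
    linarith
  · show (0:ℝ) < uu (Sum.inl j) + (if j = j then 1 else 0)
    rw [if_pos rfl]
    have h2 := huu (Sum.inl j)
    linarith

lemma ville {n m : ℕ} (hn : 0 < n) (hm : 0 < m) (B : Matrix (Fin n) (Fin m) ℝ) :
    (∃ x ∈ stdSimplex ℝ (Fin n), ∀ k, (Bᵀ *ᵥ x) k ≤ 0) ∨
    (∃ y ∈ stdSimplex ℝ (Fin m), ∀ i, 0 < (B *ᵥ y) i) := by
  classical
  set w : Fin n ⊕ Fin m → (Fin m → ℝ) :=
    Sum.elim (fun i => B i) (fun k => Pi.single k 1) with hwdef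
  set φ : ((Fin n ⊕ Fin m) → ℝ) →ₗ[ℝ] (Fin m → ℝ) :=
    { toFun := fun p => ∑ s, p s • w s
      map_add' := by intro a b; simp [add_smul, Finset.sum_add_distrib]
      map_smul' := by
        intro c a
        simp only [RingHom.id_apply, Finset.smul_sum, Pi.smul_apply, smul_eq_mul]
        congr 1; ext s; rw [smul_smul] } with hφdef
  set K : Set (Fin m → ℝ) := φ '' stdSimplex ℝ (Fin n ⊕ Fin m) with hKdef
  have hKconv : Convex ℝ K := (convex_stdSimplex ℝ _).linear_image φ
  have hφcont : Continuous φ := by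
    show Continuous fun p : (Fin n ⊕ Fin m) → ℝ => ∑ s, p s • w s
    apply continuous_finset_sum
    intro s _
    exact (continuous_apply s).smul continuous_const
  have hKcomp : IsCompact K := (isCompact_stdSimplex ℝ _).image hφcont
  have hgen : ∀ s0, w s0 ∈ K := by
    intro s0
    refine ⟨Pi.single s0 1, single_mem_stdSimplex ℝ s0, ?_⟩
    have hid : φ (Pi.single s0 1) = ∑ s, (Pi.single s0 1 : (Fin n ⊕ Fin m) → ℝ) s • w s := rfl
    rw [hid, Finset.sum_eq_single s0]
    · simp
    · intro b _ hb; simp [Pi.single_apply, hb]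
    · intro hs; exact absurd (Finset.mem_univ s0) hs
  by_cases h0 : (0 : Fin m → ℝ) ∈ K
  · -- extract coefficients
    left
    obtain ⟨p, hp, hp0⟩ := h0
    have hp0' : ∑ s, p s • w s = 0 := hp0
    rw [Fintype.sum_sum_type] at hp0'
    set lam : Fin n → ℝ := fun i => p (Sum.inl i) with hlam
    set mu : Fin m → ℝ := fun k => p (Sum.inr k) with hmu
    have hL : ∑ i, lam i • B i + ∑ k, mu k • (Pi.single k 1 : Fin m → ℝ) = 0 := by
      simpa [hwdef, hlam, hmu] using hp0'
    have hlamnn : ∀ i, 0 ≤ lam i := fun i => hp.1 _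
    have hmunn : ∀ k, 0 ≤ mu k := fun k => hp.1 _
    have hSpos : 0 < ∑ i, lam i := by
      rcases lt_or_eq_of_le (Finset.sum_nonneg (fun i _ => hlamnn i)) with h | h
      · exact h
      · exfalso
        have hlam0 : ∀ i, lam i = 0 := by
          intro i
          have := Finset.sum_eq_zero_iff_of_nonneg (fun i _ => hlamnn i) |>.mp h.symm
          exact this i (Finset.mem_univ i)
        have hmusum : ∑ k, mu k • (Pi.single k 1 : Fin m → ℝ) = 0 := by
          have : ∑ i, lam i • B i = 0 := by
            apply Finset.sum_eq_zero; intro i _; rw [hlam0 i, zero_smul]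
          rw [this, zero_add] at hL
          exact hL
        have hmu0 : ∀ k, mu k = 0 := by
          intro k
          have := congrFun hmusum k
          simp only [Finset.sum_apply, Pi.smul_apply, smul_eq_mul, Pi.zero_apply] at this
          rw [Finset.sum_eq_single k] at this
          · simpa using this
          · intro b _ hb; simp [Pi.single_apply, hb]
          · intro hk; exact absurd (Finset.mem_univ k) hk
        have h1 : ∑ s : Fin n ⊕ Fin m, p s = 1 := hp.2
        rw [Fintype.sum_sum_type] at h1
        have : (1:ℝ) = 0 := by
          rw [← h1]
          rw [Finset.sum_eq_zero (fun i _ => hlam0 i), Finset.sum_eq_zero (fun k _ => hmu0 k)]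
          norm_num
        norm_num at this
    set S := ∑ i, lam i with hS
    refine ⟨fun i => lam i / S, ⟨fun i => div_nonneg (hlamnn i) hSpos.le, ?_⟩, ?_⟩
    · rw [← Finset.sum_div, div_self (ne_of_gt hSpos)]
    · intro k
      have hk := congrFun hL k
      simp only [Finset.sum_apply, Pi.add_apply, Pi.smul_apply, smul_eq_mul,
        Pi.zero_apply] at hk
      have hsingle : ∑ k', mu k' * (Pi.single k' 1 : Fin m → ℝ) k = mu k := by
        rw [Finset.sum_eq_single k]
        · simp
        · intro b _ hb; simp [Pi.single_apply, hb]
        · intro hk'; exact absurd (Finset.mem_univ k) hk'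
      rw [hsingle] at hk
      have hBl : ∑ i, lam i * B i k = -mu k := by linarith
      have : (Bᵀ *ᵥ fun i => lam i / S) k = (∑ i, lam i * B i k) / S := by
        simp only [Matrix.mulVec, dotProduct, transpose_apply]
        rw [Finset.sum_div]
        apply Finset.sum_congr rfl
        intro i _
        ring
      rw [this, hBl]
      apply div_nonpos_of_nonpos_of_nonneg _ hSpos.le
      have := hmunn k
      linarith
  · right
    obtain ⟨f, u, hfu, huf⟩ := geometric_hahn_banach_closed_point hKconv hKcomp.isClosed h0
    have hneg : ∀ a ∈ K, f a < 0 := by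
      intro a ha
      have h1 := hfu a ha
      have h2 : f 0 = 0 := map_zero f
      rw [h2] at huf
      linarith
    set yv : Fin m → ℝ := fun k => -f (Pi.single k 1) with hyv
    have hyvpos : ∀ k, 0 < yv k := by
      intro k
      have := hneg _ (hgen (Sum.inr k))
      simp only [hwdef, Sum.elim_inr] at this
      simp [hyv]; linarith
    have hSpos : 0 < ∑ k, yv k := Finset.sum_pos (fun k _ => hyvpos k) ⟨⟨0, hm⟩, Finset.mem_univ _⟩
    refine ⟨fun k => yv k / ∑ k', yv k', ⟨fun k => div_nonneg (hyvpos k).le hSpos.le, ?_⟩, ?_⟩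
    · rw [← Finset.sum_div, div_self (ne_of_gt hSpos)]
    · intro i
      have hrow := hneg _ (hgen (Sum.inl i))
      simp only [hwdef, Sum.elim_inl] at hrow
      rw [rep_functional f (B i)] at hrow
      have h1 : 0 < ∑ k, B i k * yv k := by
        have : ∑ k, B i k * f (Pi.single k 1) = -∑ k, B i k * yv k := by
          rw [← Finset.sum_neg_distrib]
          apply Finset.sum_congr rfl; intro k _; simp [hyv]
        rw [this] at hrow
        linarith
      have : (B *ᵥ fun k => yv k / ∑ k', yv k') i = (∑ k, B i k * yv k) / ∑ k', yv k' := by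
        simp only [Matrix.mulVec, dotProduct]
        rw [Finset.sum_div]
        apply Finset.sum_congr rfl
        intro k _
        ring
      rw [this]
      exact div_pos h1 hSpos

lemma dot_le_of_forall_le {m : ℕ} {w y : Fin m → ℝ} (hy : y ∈ stdSimplex ℝ (Fin m))
    {M : ℝ} (h : ∀ k, w k ≤ M) : w ⬝ᵥ y ≤ M := by
  calc w ⬝ᵥ y = ∑ k, w k * y k := rfl
    _ ≤ ∑ k, M * y k :=
      Finset.sum_le_sum fun k _ => mul_le_mul_of_nonneg_right (h k) (hy.1 k)
    _ = M * ∑ k, y k := by rw [Finset.mul_sum]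
    _ = M := by rw [hy.2, mul_one]

lemma le_dot_of_forall_le {m : ℕ} {w y : Fin m → ℝ} (hy : y ∈ stdSimplex ℝ (Fin m))
    {M : ℝ} (h : ∀ k, M ≤ w k) : M ≤ w ⬝ᵥ y := by
  calc M = M * ∑ k, y k := by rw [hy.2, mul_one]
    _ = ∑ k, M * y k := by rw [Finset.mul_sum]
    _ ≤ ∑ k, w k * y k :=
      Finset.sum_le_sum fun k _ => mul_le_mul_of_nonneg_right (h k) (hy.1 k)
    _ = w ⬝ᵥ y := rfl

lemma main_setup {n m : ℕ} (hn : 0 < n) (hm : 0 < m) (A : Matrix (Fin n) (Fin m) ℝ) :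
    ∃ v : ℝ, gameValue A = v ∧
      (∃ x, x ∈ stdSimplex ℝ (Fin n) ∧ ∀ k, (Aᵀ *ᵥ x) k ≤ v) ∧
      (∃ y, y ∈ stdSimplex ℝ (Fin m) ∧ ∀ i, v ≤ (A *ᵥ y) i) ∧
      (∀ x y, IsNashPair A x y ↔
        ((x ∈ stdSimplex ℝ (Fin n) ∧ ∀ k, (Aᵀ *ᵥ x) k ≤ v) ∧
         (y ∈ stdSimplex ℝ (Fin m) ∧ ∀ i, v ≤ (A *ᵥ y) i))) := by
  classical
  haveI hNn : Nonempty (Fin n) := ⟨⟨0, hn⟩⟩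
  haveI hNm : Nonempty (Fin m) := ⟨⟨0, hm⟩⟩
  have hunivn : (Finset.univ : Finset (Fin n)).Nonempty := Finset.univ_nonempty
  have hunivm : (Finset.univ : Finset (Fin m)).Nonempty := Finset.univ_nonempty
  set G : (Fin n → ℝ) → ℝ := fun x => Finset.univ.sup' hunivm (fun k => (Aᵀ *ᵥ x) k) with hGdef
  set H : (Fin m → ℝ) → ℝ := fun y => Finset.univ.inf' hunivn (fun i => (A *ᵥ y) i) with hHdef
  -- rewrite the inner sSup
  have hdot : ∀ (x : Fin n → ℝ) (y : Fin m → ℝ), x ⬝ᵥ A.mulVec y = (Aᵀ *ᵥ x) ⬝ᵥ y := by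
    intro x y
    rw [Matrix.dotProduct_mulVec, Matrix.mulVec_transpose]
  have hdot' : ∀ (x : Fin n → ℝ) (y : Fin m → ℝ), x ⬝ᵥ A.mulVec y = (A *ᵥ y) ⬝ᵥ x := by
    intro x y
    rw [dotProduct_comm]
  have hsup : ∀ x : Fin n → ℝ, sSup ((fun y => x ⬝ᵥ A.mulVec y) '' stdSimplex ℝ (Fin m)) = G x := by
    intro x
    apply le_antisymm
    · apply csSup_le
      · exact (Set.Nonempty.image _ ⟨_, single_mem_stdSimplex ℝ (Classical.arbitrary (Fin m))⟩)
      · rintro z ⟨y, hy, rfl⟩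
        show x ⬝ᵥ A.mulVec y ≤ G x
        rw [hdot]
        exact dot_le_of_forall_le hy (fun k => Finset.le_sup' _ (Finset.mem_univ k))
    · obtain ⟨k0, _, hk0⟩ := Finset.exists_mem_eq_sup' hunivm (fun k => (Aᵀ *ᵥ x) k)
      rw [hGdef]
      simp only
      rw [hk0]
      have hmem : x ⬝ᵥ A.mulVec (Pi.single k0 1) ∈
          (fun y => x ⬝ᵥ A.mulVec y) '' stdSimplex ℝ (Fin m) :=
        ⟨Pi.single k0 1, single_mem_stdSimplex ℝ k0, rfl⟩
      have heq : x ⬝ᵥ A.mulVec (Pi.single k0 1) = (Aᵀ *ᵥ x) k0 := by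
        rw [hdot, dotProduct_single, mul_one]
      refine le_csSup ⟨G x, ?_⟩ (by rw [← heq] at *; exact hmem)
      rintro z ⟨y, hy, rfl⟩
      show x ⬝ᵥ A.mulVec y ≤ G x
      rw [hdot]
      exact dot_le_of_forall_le hy (fun k => Finset.le_sup' _ (Finset.mem_univ k))
  have hgv : gameValue A = sInf (G '' stdSimplex ℝ (Fin n)) := by
    unfold gameValue
    congr 1
    apply Set.image_congr
    intro x _
    exact hsup x
  -- continuity of G
  have hGcont : Continuous G := by
    rw [continuous_iff_continuousAt]
    intro x
    apply ContinuousAt.finset_sup'_apply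
    intro k _
    show ContinuousAt (fun x : Fin n → ℝ => (Aᵀ *ᵥ x) k) x
    have : Continuous (fun x : Fin n → ℝ => (Aᵀ *ᵥ x) k) := by
      simp only [Matrix.mulVec, dotProduct]
      exact continuous_finset_sum _ fun i _ => (continuous_const.mul (continuous_apply i))
    exact this.continuousAt
  have hHcont : Continuous H := by
    rw [continuous_iff_continuousAt]
    intro y
    apply ContinuousAt.finset_inf'_apply
    intro i _
    show ContinuousAt (fun y : Fin m → ℝ => (A *ᵥ y) i) y
    have : Continuous (fun y : Fin m → ℝ => (A *ᵥ y) i) := by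
      simp only [Matrix.mulVec, dotProduct]
      exact continuous_finset_sum _ fun k _ => (continuous_const.mul (continuous_apply k))
    exact this.continuousAt
  have hΔn : (stdSimplex ℝ (Fin n)).Nonempty := ⟨_, single_mem_stdSimplex ℝ (Classical.arbitrary _)⟩
  have hΔm : (stdSimplex ℝ (Fin m)).Nonempty := ⟨_, single_mem_stdSimplex ℝ (Classical.arbitrary _)⟩
  obtain ⟨x0, hx0Δ, hx0min⟩ := (isCompact_stdSimplex ℝ (Fin n)).exists_isMinOn hΔn hGcont.continuousOn
  obtain ⟨y0, hy0Δ, hy0max⟩ := (isCompact_stdSimplex ℝ (Fin m)).exists_isMaxOn hΔm hHcont.continuousOn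
  have hGlb : ∀ x ∈ stdSimplex ℝ (Fin n), G x0 ≤ G x := fun x hx => hx0min hx
  have hHub : ∀ y ∈ stdSimplex ℝ (Fin m), H y ≤ H y0 := fun y hy => hy0max hy
  -- sandwich
  have hsand : ∀ x ∈ stdSimplex ℝ (Fin n), ∀ y ∈ stdSimplex ℝ (Fin m),
      H y ≤ x ⬝ᵥ A.mulVec y ∧ x ⬝ᵥ A.mulVec y ≤ G x := by
    intro x hx y hy
    constructor
    · rw [hdot']
      exact le_dot_of_forall_le hx (fun i => Finset.inf'_le _ (Finset.mem_univ i))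
    · rw [hdot]
      exact dot_le_of_forall_le hy (fun k => Finset.le_sup' _ (Finset.mem_univ k))
  -- minimax equality
  have hmini : G x0 = H y0 := by
    apply le_antisymm
    · by_contra hlt
      push_neg at hlt
      set v := (G x0 + H y0) / 2 with hvdef
      have hv1 : v < G x0 := by rw [hvdef]; linarith
      have hv2 : H y0 < v := by rw [hvdef]; linarith
      set B : Matrix (Fin n) (Fin m) ℝ := fun i k => A i k - v with hBdef
      rcases ville hn hm B with ⟨x, hxΔ, hx⟩ | ⟨y, hyΔ, hy⟩
      · have hGx : G x ≤ v := by
          apply Finset.sup'_le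
          intro k _
          have := hx k
          have hBx : (Bᵀ *ᵥ x) k = (Aᵀ *ᵥ x) k - v := by
            simp only [Matrix.mulVec, dotProduct, transpose_apply, hBdef, Matrix.transpose, Matrix.of_apply]
            rw [Finset.sum_congr rfl (fun i _ => sub_mul (A i k) v (x i)), Finset.sum_sub_distrib]
            rw [← Finset.mul_sum, hxΔ.2, mul_one]
          linarith
        have := hGlb x hxΔ
        linarith
      · have hHy : v ≤ H y := by
          apply Finset.le_inf'
          intro i _
          have := hy i
          have hBy : (B *ᵥ y) i = (A *ᵥ y) i - v := by
            simp only [Matrix.mulVec, dotProduct, hBdef]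
            rw [Finset.sum_congr rfl (fun k _ => sub_mul (A i k) v (y k)), Finset.sum_sub_distrib]
            rw [← Finset.mul_sum, hyΔ.2, mul_one]
          linarith
        have := hHub y hyΔ
        linarith
    · have := (hsand x0 hx0Δ y0 hy0Δ)
      linarith [this.1, this.2]
  set v := G x0 with hvdef
  have hval : gameValue A = v := by
    rw [hgv]
    apply le_antisymm
    · exact csInf_le ⟨v, by rintro z ⟨x, hx, rfl⟩; exact hGlb x hx⟩ ⟨x0, hx0Δ, rfl⟩
    · exact le_csInf (hΔn.image G) (by rintro z ⟨x, hx, rfl⟩; exact hGlb x hx)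
  have hx0opt : ∀ k, (Aᵀ *ᵥ x0) k ≤ v := fun k => Finset.le_sup' _ (Finset.mem_univ k)
  have hy0opt : ∀ i, v ≤ (A *ᵥ y0) i := fun i => by
    have h1 : H y0 ≤ (A *ᵥ y0) i := Finset.inf'_le _ (Finset.mem_univ i)
    rw [hmini]; exact h1
  refine ⟨v, hval, ⟨x0, hx0Δ, hx0opt⟩, ⟨y0, hy0Δ, hy0opt⟩, ?_⟩
  intro x y
  constructor
  · rintro ⟨hxΔ, hyΔ, h1, h2⟩
    have hGx : G x ≤ x ⬝ᵥ A.mulVec y := by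
      apply Finset.sup'_le
      intro k _
      have := h2 (Pi.single k 1) (single_mem_stdSimplex ℝ k)
      have h5 : x ⬝ᵥ A.mulVec (Pi.single k 1) = (Aᵀ *ᵥ x) k := by
        rw [hdot, dotProduct_single, mul_one]
      rw [h5] at this
      exact this
    have hHy : x ⬝ᵥ A.mulVec y ≤ H y := by
      apply Finset.le_inf'
      intro i _
      have := h1 (Pi.single i 1) (single_mem_stdSimplex ℝ i)
      have h5 : (Pi.single i 1 : Fin n → ℝ) ⬝ᵥ A.mulVec y = (A *ᵥ y) i := by
        rw [single_dotProduct, one_mul]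
      rw [h5] at this
      exact this
    have hc1 : v ≤ G x := hGlb x hxΔ
    have hc2 : H y ≤ v := by rw [hmini]; exact hHub y hyΔ
    have hcv : x ⬝ᵥ A.mulVec y = v := le_antisymm (le_trans hHy hc2) (le_trans hc1 hGx)
    refine ⟨⟨hxΔ, fun k => ?_⟩, ⟨hyΔ, fun i => ?_⟩⟩
    · have h3 : (Aᵀ *ᵥ x) k ≤ G x := Finset.le_sup' _ (Finset.mem_univ k)
      linarith [le_trans hGx (le_trans hHy hc2)]
      -- (Aᵀ x) k ≤ G x ≤ v
    · have h3 : H y ≤ (A *ᵥ y) i := Finset.inf'_le _ (Finset.mem_univ i)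
      have h4 : v ≤ H y := le_trans hc1 (le_trans hGx hHy)
      linarith
  · rintro ⟨⟨hxΔ, hxopt⟩, ⟨hyΔ, hyopt⟩⟩
    refine ⟨hxΔ, hyΔ, ?_, ?_⟩
    · intro x' hx'
      have h1 : x ⬝ᵥ A.mulVec y ≤ v := by
        rw [hdot]; exact dot_le_of_forall_le hyΔ hxopt
      have h2 : v ≤ x' ⬝ᵥ A.mulVec y := by
        rw [hdot']; exact le_dot_of_forall_le hx' hyopt
      linarith
    · intro y' hy'
      have h1 : x ⬝ᵥ A.mulVec y' ≤ v := by
        rw [hdot]; exact dot_le_of_forall_le hy' hxopt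
      have h2 : v ≤ x ⬝ᵥ A.mulVec y := by
        rw [hdot']; exact le_dot_of_forall_le hxΔ hyopt
      linarith

lemma bks_aux {n m : ℕ} (A : Matrix (Fin n) (Fin m) ℝ) (v : ℝ) (j : Fin n)
    (h : ∀ x ∈ stdSimplex ℝ (Fin n), (∀ k, (Aᵀ *ᵥ x) k ≤ v) → x j = 0) :
    ∃ y ∈ stdSimplex ℝ (Fin m), (∀ i, v ≤ (A *ᵥ y) i) ∧ v < (A *ᵥ y) j := by
  classical
  set B : Matrix (Fin n) (Fin m) ℝ := fun i k => A i k - v with hBdef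
  have hBmul : ∀ (y : Fin m → ℝ) (i : Fin n), (B *ᵥ y) i = (A *ᵥ y) i - v * ∑ k, y k := by
    intro y i
    simp only [Matrix.mulVec, dotProduct, hBdef]
    rw [Finset.sum_congr rfl (fun k _ => sub_mul (A i k) v (y k)), Finset.sum_sub_distrib,
      ← Finset.mul_sum]
  have hBt : ∀ (x : Fin n → ℝ) (k : Fin m), (Bᵀ *ᵥ x) k = (Aᵀ *ᵥ x) k - v * ∑ i, x i := by
    intro x k
    simp only [Matrix.mulVec, dotProduct, transpose_apply, hBdef, Matrix.transpose, Matrix.of_apply]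
    rw [Finset.sum_congr rfl (fun i _ => sub_mul (A i k) v (x i)), Finset.sum_sub_distrib,
      ← Finset.mul_sum]
  -- the Farkas hypothesis fails, otherwise we contradict h
  by_cases hyp : ∀ y : Fin m → ℝ, (∀ k, 0 ≤ y k) → (∀ i, 0 ≤ (B *ᵥ y) i) → (B *ᵥ y) j ≤ 0
  · obtain ⟨x', hx'nn, hx'B, hx'j⟩ := farkas_row B j hyp
    set s := ∑ i, x' i with hs
    have hspos : 0 < s := lt_of_lt_of_le hx'j (Finset.single_le_sum (fun i _ => hx'nn i)
      (Finset.mem_univ j))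
    set x : Fin n → ℝ := fun i => x' i / s with hx
    have hxΔ : x ∈ stdSimplex ℝ (Fin n) :=
      ⟨fun i => div_nonneg (hx'nn i) hspos.le, by
        show ∑ i, x' i / s = 1
        rw [← Finset.sum_div, div_self (ne_of_gt hspos)]⟩
    have hxopt : ∀ k, (Aᵀ *ᵥ x) k ≤ v := by
      intro k
      have h1 := hx'B k
      rw [hBt x' k] at h1
      have h2 : (Aᵀ *ᵥ x) k = (Aᵀ *ᵥ x') k / s := by
        simp only [Matrix.mulVec, dotProduct, transpose_apply, hx]
        rw [Finset.sum_div]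
        apply Finset.sum_congr rfl
        intro i _
        ring
      rw [h2]
      rw [div_le_iff₀ hspos]
      linarith
    have := h x hxΔ hxopt
    rw [hx] at this
    simp only at this
    have : x' j = 0 := by
      simpa [ne_of_gt hspos] using this
    linarith
  · push_neg at hyp
    obtain ⟨y', hy'nn, hy'B, hy'j⟩ := hyp
    set s := ∑ k, y' k with hs
    have hspos : 0 < s := by
      rcases lt_or_eq_of_le (Finset.sum_nonneg (fun k _ => hy'nn k)) with hlt | heq
      · exact hlt
      · exfalso
        have hy0 : ∀ k, y' k = 0 := fun k =>
          (Finset.sum_eq_zero_iff_of_nonneg (fun k _ => hy'nn k)).mp heq.symm k (Finset.mem_univ k)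
        have : (B *ᵥ y') j = 0 := by
          simp only [Matrix.mulVec, dotProduct]
          apply Finset.sum_eq_zero
          intro k _
          rw [hy0 k, mul_zero]
        linarith
    refine ⟨fun k => y' k / s, ⟨fun k => div_nonneg (hy'nn k) hspos.le, by
      show ∑ k, y' k / s = 1
      rw [← Finset.sum_div, div_self (ne_of_gt hspos)]⟩, ?_, ?_⟩
    · intro i
      have h1 := hy'B i
      rw [hBmul y' i, ← hs] at h1
      have h2 : (A *ᵥ fun k => y' k / s) i = (A *ᵥ y') i / s := by
        simp only [Matrix.mulVec, dotProduct]
        rw [Finset.sum_div]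
        apply Finset.sum_congr rfl
        intro k _
        ring
      rw [h2, le_div_iff₀ hspos]
      linarith
    · have h1 := hy'j
      rw [hBmul y' j, ← hs] at h1
      have h2 : (A *ᵥ fun k => y' k / s) j = (A *ᵥ y') j / s := by
        simp only [Matrix.mulVec, dotProduct]
        rw [Finset.sum_div]
        apply Finset.sum_congr rfl
        intro k _
        ring
      rw [h2, lt_div_iff₀ hspos]
      linarith

lemma bks_col {n m : ℕ} (A : Matrix (Fin n) (Fin m) ℝ) (v : ℝ) (k : Fin m)
    (h : ∀ y ∈ stdSimplex ℝ (Fin m), (∀ i, v ≤ (A *ᵥ y) i) → y k = 0) :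
    ∃ x ∈ stdSimplex ℝ (Fin n), (∀ k', (Aᵀ *ᵥ x) k' ≤ v) ∧ (Aᵀ *ᵥ x) k < v := by
  have h' : ∀ y ∈ stdSimplex ℝ (Fin m), (∀ i, ((-Aᵀ)ᵀ *ᵥ y) i ≤ -v) → y k = 0 := by
    intro y hy hle
    apply h y hy
    intro i
    have := hle i
    rw [Matrix.transpose_neg, Matrix.transpose_transpose, Matrix.neg_mulVec] at this
    simp only [Pi.neg_apply] at this
    linarith
  obtain ⟨x, hxΔ, hxge, hxk⟩ := bks_aux (-Aᵀ) (-v) k h'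
  refine ⟨x, hxΔ, ?_, ?_⟩
  · intro k'
    have := hxge k'
    rw [Matrix.neg_mulVec] at this
    simp only [Pi.neg_apply] at this
    linarith
  · rw [Matrix.neg_mulVec] at hxk
    simp only [Pi.neg_apply] at hxk
    linarith

lemma mulVec_avg {a b : ℕ} (M : Matrix (Fin a) (Fin b) ℝ) {ι : Type*} [Fintype ι]
    (w : ι → (Fin b → ℝ)) (c : ℝ) (k : Fin a) :
    (M *ᵥ fun i => (∑ s, w s i) / c) k = (∑ s, (M *ᵥ w s) k) / c := by
  simp only [Matrix.mulVec, dotProduct]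
  calc ∑ x, M k x * ((∑ s, w s x) / c)
      = ∑ x, ∑ s, M k x * w s x / c := by
        apply Finset.sum_congr rfl; intro x _
        rw [Finset.sum_div, Finset.mul_sum]
        apply Finset.sum_congr rfl; intro s _
        ring
    _ = ∑ s, ∑ x, M k x * w s x / c := Finset.sum_comm
    _ = ∑ s, (∑ x, M k x * w s x) / c := by
        apply Finset.sum_congr rfl; intro s _
        rw [Finset.sum_div]
    _ = (∑ s, ∑ x, M k x * w s x) / c := (Finset.sum_div _ _ _).symm


end Aux

/-- There is a Nash equilibrium in which each player plays every one of their essential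
pure strategies with positive probability, and whose off-support payoffs are strictly
separated from the value of the game. -/
theorem exists_nash_with_all_essential_strategies
    (n m : ℕ) (hn : 0 < n) (hm : 0 < m) (A : Matrix (Fin n) (Fin m) ℝ) :
    ∃ xs : Fin n → ℝ, ∃ ys : Fin m → ℝ, IsNashPair A xs ys ∧
      (∀ j : Fin n, (∃ x y, IsNashPair A x y ∧ 0 < x j) → 0 < xs j) ∧
      (∀ k : Fin m, (∃ x y, IsNashPair A x y ∧ 0 < y k) → 0 < ys k) ∧
      (∀ j : Fin n, xs j = 0 → gameValue A < A.mulVec ys j) ∧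
      (∀ k : Fin m, ys k = 0 → A.transpose.mulVec xs k < gameValue A) := by
  classical
  obtain ⟨v, hval, ⟨x0, hx0Δ, hx0opt⟩, ⟨y0, hy0Δ, hy0opt⟩, hiff⟩ := main_setup hn hm A
  set OptX : (Fin n → ℝ) → Prop :=
    fun x => x ∈ stdSimplex ℝ (Fin n) ∧ ∀ k, (Aᵀ *ᵥ x) k ≤ v with hOptX
  set OptY : (Fin m → ℝ) → Prop :=
    fun y => y ∈ stdSimplex ℝ (Fin m) ∧ ∀ i, v ≤ (A *ᵥ y) i with hOptY
  have hx0 : OptX x0 := ⟨hx0Δ, hx0opt⟩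
  have hy0 : OptY y0 := ⟨hy0Δ, hy0opt⟩
  set pickX : Fin n ⊕ Fin m → (Fin n → ℝ) := fun s =>
    Sum.rec (fun j => if h : ∃ x, OptX x ∧ 0 < x j then h.choose else x0)
      (fun k => if h : ∃ x, OptX x ∧ (Aᵀ *ᵥ x) k < v then h.choose else x0) s with hpX
  set pickY : Fin n ⊕ Fin m → (Fin m → ℝ) := fun s =>
    Sum.rec (fun j => if h : ∃ y, OptY y ∧ v < (A *ᵥ y) j then h.choose else y0)
      (fun k => if h : ∃ y, OptY y ∧ 0 < y k then h.choose else y0) s with hpY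
  have hpickX : ∀ s, OptX (pickX s) := by
    rintro (j | k) <;> simp only [hpX]
    · split
      · next h => exact h.choose_spec.1
      · exact hx0
    · split
      · next h => exact h.choose_spec.1
      · exact hx0
  have hpickY : ∀ s, OptY (pickY s) := by
    rintro (j | k) <;> simp only [hpY]
    · split
      · next h => exact h.choose_spec.1
      · exact hy0
    · split
      · next h => exact h.choose_spec.1
      · exact hy0
  set c : ℝ := ((n + m : ℕ) : ℝ) with hc
  have hcpos : 0 < c := by
    rw [hc]
    exact_mod_cast Nat.add_pos_left hn m
  have hcsum : ∑ _s : Fin n ⊕ Fin m, (1:ℝ) = c := by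
    rw [Finset.sum_const, Finset.card_univ, Fintype.card_sum, Fintype.card_fin, Fintype.card_fin,
      nsmul_eq_mul, mul_one, hc]
  set xs : Fin n → ℝ := fun i => (∑ s, pickX s i) / c with hxs
  set ys : Fin m → ℝ := fun k => (∑ s, pickY s k) / c with hys
  have hxsΔ : xs ∈ stdSimplex ℝ (Fin n) := by
    constructor
    · intro i
      exact div_nonneg (Finset.sum_nonneg fun s _ => (hpickX s).1.1 i) hcpos.le
    · show ∑ i, (∑ s, pickX s i) / c = 1
      rw [← Finset.sum_div, Finset.sum_comm]
      rw [Finset.sum_congr rfl (fun s _ => (hpickX s).1.2)]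
      rw [hcsum, div_self (ne_of_gt hcpos)]
  have hysΔ : ys ∈ stdSimplex ℝ (Fin m) := by
    constructor
    · intro k
      exact div_nonneg (Finset.sum_nonneg fun s _ => (hpickY s).1.1 k) hcpos.le
    · show ∑ k, (∑ s, pickY s k) / c = 1
      rw [← Finset.sum_div, Finset.sum_comm]
      rw [Finset.sum_congr rfl (fun s _ => (hpickY s).1.2)]
      rw [hcsum, div_self (ne_of_gt hcpos)]
  have hxsopt : ∀ k, (Aᵀ *ᵥ xs) k ≤ v := by
    intro k
    rw [hxs, mulVec_avg, div_le_iff₀ hcpos]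
    calc ∑ s, (Aᵀ *ᵥ pickX s) k ≤ ∑ _s : Fin n ⊕ Fin m, v :=
          Finset.sum_le_sum fun s _ => (hpickX s).2 k
      _ = v * c := by rw [Finset.sum_const, Finset.card_univ, Fintype.card_sum,
          Fintype.card_fin, Fintype.card_fin, nsmul_eq_mul, hc, mul_comm]
  have hysopt : ∀ i, v ≤ (A *ᵥ ys) i := by
    intro i
    rw [hys, mulVec_avg, le_div_iff₀ hcpos]
    calc v * c = ∑ _s : Fin n ⊕ Fin m, v := by rw [Finset.sum_const, Finset.card_univ,
          Fintype.card_sum, Fintype.card_fin, Fintype.card_fin, nsmul_eq_mul, hc, mul_comm]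
      _ ≤ ∑ s, (A *ᵥ pickY s) i := Finset.sum_le_sum fun s _ => (hpickY s).2 i
  refine ⟨xs, ys, (hiff xs ys).mpr ⟨⟨hxsΔ, hxsopt⟩, ⟨hysΔ, hysopt⟩⟩, ?_, ?_, ?_, ?_⟩
  · -- essential rows
    rintro j ⟨x, y, hNE, hxj⟩
    have hOx : OptX x := ((hiff x y).mp hNE).1
    have hP : ∃ x, OptX x ∧ 0 < x j := ⟨x, hOx, hxj⟩
    have hpick : 0 < pickX (Sum.inl j) j := by
      simp only [hpX]
      rw [dif_pos hP]
      exact hP.choose_spec.2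
    have hsum : pickX (Sum.inl j) j ≤ ∑ s, pickX s j :=
      Finset.single_le_sum (f := fun s => pickX s j) (fun s _ => (hpickX s).1.1 j)
        (Finset.mem_univ (Sum.inl j))
    exact div_pos (lt_of_lt_of_le hpick hsum) hcpos
  · -- essential cols
    rintro k ⟨x, y, hNE, hyk⟩
    have hOy : OptY y := ((hiff x y).mp hNE).2
    have hP : ∃ y, OptY y ∧ 0 < y k := ⟨y, hOy, hyk⟩
    have hpick : 0 < pickY (Sum.inr k) k := by
      simp only [hpY]
      rw [dif_pos hP]
      exact hP.choose_spec.2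
    have hsum : pickY (Sum.inr k) k ≤ ∑ s, pickY s k :=
      Finset.single_le_sum (f := fun s => pickY s k) (fun s _ => (hpickY s).1.1 k)
        (Finset.mem_univ (Sum.inr k))
    exact div_pos (lt_of_lt_of_le hpick hsum) hcpos
  · -- strict rows
    intro j hxsj
    rw [hval]
    have hsum0 : ∑ s, pickX s j = 0 := by
      have h0 : (∑ s, pickX s j) / c = 0 := hxsj
      rcases div_eq_zero_iff.mp h0 with h | h
      · exact h
      · exact absurd h (ne_of_gt hcpos)
    have hterm0 : pickX (Sum.inl j) j = 0 :=
      (Finset.sum_eq_zero_iff_of_nonneg (f := fun s => pickX s j)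
        (fun s _ => (hpickX s).1.1 j)).mp hsum0 (Sum.inl j) (Finset.mem_univ _)
    have hno : ¬∃ x, OptX x ∧ 0 < x j := by
      intro hP
      have : 0 < pickX (Sum.inl j) j := by
        simp only [hpX]
        rw [dif_pos hP]
        exact hP.choose_spec.2
      linarith
    have hallzero : ∀ x ∈ stdSimplex ℝ (Fin n), (∀ k, (Aᵀ *ᵥ x) k ≤ v) → x j = 0 := by
      intro x hxΔ hxopt
      by_contra hne
      exact hno ⟨x, ⟨hxΔ, hxopt⟩, lt_of_le_of_ne (hxΔ.1 j) (Ne.symm hne)⟩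
    obtain ⟨y', hy'Δ, hy'ge, hy'j⟩ := bks_aux A v j hallzero
    have hQ : ∃ y, OptY y ∧ v < (A *ᵥ y) j := ⟨y', ⟨hy'Δ, hy'ge⟩, hy'j⟩
    have hpickj : v < (A *ᵥ pickY (Sum.inl j)) j := by
      simp only [hpY]
      rw [dif_pos hQ]
      exact hQ.choose_spec.2
    have : (A.mulVec ys) j = (∑ s, (A *ᵥ pickY s) j) / c := by rw [hys, mulVec_avg]
    rw [this, lt_div_iff₀ hcpos]
    calc v * c = ∑ _s : Fin n ⊕ Fin m, v := by rw [Finset.sum_const, Finset.card_univ,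
          Fintype.card_sum, Fintype.card_fin, Fintype.card_fin, nsmul_eq_mul, hc, mul_comm]
      _ < ∑ s, (A *ᵥ pickY s) j := by
          apply Finset.sum_lt_sum (fun s _ => (hpickY s).2 j)
          exact ⟨Sum.inl j, Finset.mem_univ _, hpickj⟩
  · -- strict cols
    intro k hysk
    rw [hval]
    have hsum0 : ∑ s, pickY s k = 0 := by
      have h0 : (∑ s, pickY s k) / c = 0 := hysk
      rcases div_eq_zero_iff.mp h0 with h | h
      · exact h
      · exact absurd h (ne_of_gt hcpos)
    have hterm0 : pickY (Sum.inr k) k = 0 :=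
      (Finset.sum_eq_zero_iff_of_nonneg (f := fun s => pickY s k)
        (fun s _ => (hpickY s).1.1 k)).mp hsum0 (Sum.inr k) (Finset.mem_univ _)
    have hno : ¬∃ y, OptY y ∧ 0 < y k := by
      intro hP
      have : 0 < pickY (Sum.inr k) k := by
        simp only [hpY]
        rw [dif_pos hP]
        exact hP.choose_spec.2
      linarith
    have hallzero : ∀ y ∈ stdSimplex ℝ (Fin m), (∀ i, v ≤ (A *ᵥ y) i) → y k = 0 := by
      intro y hyΔ hyopt
      by_contra hne
      exact hno ⟨y, ⟨hyΔ, hyopt⟩, lt_of_le_of_ne (hyΔ.1 k) (Ne.symm hne)⟩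
    obtain ⟨x', hx'Δ, hx'le, hx'k⟩ := bks_col A v k hallzero
    have hQ : ∃ x, OptX x ∧ (Aᵀ *ᵥ x) k < v := ⟨x', ⟨hx'Δ, hx'le⟩, hx'k⟩
    have hpickk : (Aᵀ *ᵥ pickX (Sum.inr k)) k < v := by
      simp only [hpX]
      rw [dif_pos hQ]
      exact hQ.choose_spec.2
    have : (A.transpose.mulVec xs) k = (∑ s, (Aᵀ *ᵥ pickX s) k) / c := by rw [hxs, mulVec_avg]
    rw [this, div_lt_iff₀ hcpos]
    calc ∑ s, (Aᵀ *ᵥ pickX s) k < ∑ _s : Fin n ⊕ Fin m, v := by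
          apply Finset.sum_lt_sum (fun s _ => (hpickX s).2 k)
          exact ⟨Sum.inr k, Finset.mem_univ _, hpickk⟩
      _ = v * c := by rw [Finset.sum_const, Finset.card_univ,
          Fintype.card_sum, Fintype.card_fin, Fintype.card_fin, nsmul_eq_mul, hc, mul_comm]
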